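/- Let X and Y be discrete uniformly proper metric spaces that are quasi-isometric. Then Growth(X) = Growth(Y), i.e., for any non-empty finite subsets A ⊆ X and B ⊆ Y, the growth functions β_{X,A} and β_{Y,B} have equivalent growth rate. -/

import Mathlib

/-- The growth comparison relation: `f ≼ g` iff there is `C > 0` with
`f n ≤ C * g (C*n + C) + C` for all `n`. -/
def GrowthLE (f g : ℕ → ℕ) : Prop :=
  ∃ C : ℕ, 0 < C ∧ ∀ n, f n ≤ C * g (C * n + C) + C

/-- Equivalence of growth rates. -/
def GrowthEquiv (f g : ℕ → ℕ) : Prop := GrowthLE f g ∧ GrowthLE g f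

/-- The growth function of a subset `U` of a metric space, with basepoint set `A`:
`n ↦ #(U ∩ B(A, n))`. -/
noncomputable def relGrowth {X : Type*} [MetricSpace X] (U A : Set X) : ℕ → ℕ :=
  fun n => Set.ncard {x | x ∈ U ∧ ∃ a ∈ A, dist a x ≤ (n : ℝ)}

/-- A metric space is discrete and proper iff all balls (of integer radius) are finite. -/
def DiscreteProper (X : Type*) [MetricSpace X] : Prop :=
  ∀ (x : X) (n : ℕ), {y : X | dist x y ≤ (n : ℝ)}.Finite

/-- Uniformly proper: there is a uniform bound on cardinalities of all balls of radius `n`. -/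
def UniformlyProper (X : Type*) [MetricSpace X] : Prop :=
  ∃ g : ℕ → ℕ, ∀ (x : X) (n : ℕ),
    {y : X | dist x y ≤ (n : ℝ)}.Finite ∧ Set.ncard {y : X | dist x y ≤ (n : ℝ)} ≤ g n

/-- A `c`-quasi-isometry between metric spaces. -/
def IsQuasiIsometryMS {X Y : Type*} [MetricSpace X] [MetricSpace Y] (c : ℝ) (φ : X → Y) : Prop :=
  1 ≤ c ∧
  (∀ a b : X, dist a b / c - c ≤ dist (φ a) (φ b) ∧ dist (φ a) (φ b) ≤ c * dist a b + c) ∧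
  (∀ y : Y, ∃ x : X, dist (φ x) y ≤ c)

/-- Growth function of `U ⊆ V(G)` (with the metric induced by the path-metric of `G`)
with respect to basepoint set `A`. -/
noncomputable def graphGrowth {V : Type*} (G : SimpleGraph V) (U A : Set V) : ℕ → ℕ :=
  fun n => Set.ncard {v | v ∈ U ∧ ∃ a ∈ A, G.dist a v ≤ n}

/-- `Growth(U) = Growth(G)` for `U` a set of vertices of `G` with the induced metric. -/
def GrowthEqFull {V : Type*} (G : SimpleGraph V) (U : Set V) : Prop :=
  ∃ u₀ ∈ U, GrowthEquiv (graphGrowth G Set.univ {u₀}) (graphGrowth G U {u₀})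

/-- The set of vertices protected up to (and including) time `n`. -/
def protectedUpTo {V : Type*} (W : ℕ → Set V) (n : ℕ) : Set V :=
  ⋃ i ∈ Finset.Icc 1 n, W i

/-- The set of vertices on fire at time `n`, for fire reach `r`, strategy `W` and
initial fire `X0`: `X (n+1)` consists of vertices joined to `X n` by a path of length
at most `r` avoiding `(W 1 ∪ ⋯ ∪ W (n+1)) \ X n`. -/
def fireSet {V : Type*} (G : SimpleGraph V) (r : ℕ) (W : ℕ → Set V) (X0 : Set V) : ℕ → Set V
  | 0 => X0
  | n + 1 =>
    {v | ∃ u ∈ fireSet G r W X0 n, ∃ p : G.Walk u v, p.length ≤ r ∧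
      ∀ x ∈ p.support, x ∉ protectedUpTo W (n + 1) \ fireSet G r W X0 n}

/-- The set of vertices on fire at the end of the game. -/
def burnedSet {V : Type*} (G : SimpleGraph V) (r : ℕ) (W : ℕ → Set V) (X0 : Set V) : Set V :=
  ⋃ n, fireSet G r W X0 n

/-- An `{f n}`-strategy: at each time `n ≥ 1` at most `f n` vertices are protected. -/
def IsStrategyBound {V : Type*} (f : ℕ → ℕ) (W : ℕ → Set V) : Prop :=
  ∀ n, 1 ≤ n → (W n).Finite ∧ (W n).ncard ≤ f n

/-- A finite-step strategy protects no vertices after some finite time. -/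
def FiniteStepStrategy {V : Type*} (W : ℕ → Set V) : Prop :=
  ∃ N, ∀ n, N ≤ n → W n = ∅

/-- A retaining `({f n}, r)`-strategy for the initial fire `X0`. -/
def IsRetainingStrategy {V : Type*} (G : SimpleGraph V) (f : ℕ → ℕ) (r : ℕ)
    (X0 : Set V) (W : ℕ → Set V) : Prop :=
  IsStrategyBound f W ∧ GrowthEqFull G (burnedSet G r W X0)ᶜ

/-- The `({f n}, r)`-retaining property. -/
def RetainingProperty {V : Type*} (G : SimpleGraph V) (f : ℕ → ℕ) (r : ℕ) : Prop :=
  ∀ X0 : Set V, X0.Finite → ∃ W, IsRetainingStrategy G f r X0 W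

/-- Polynomial retaining property of degree `d` (fire reach one). -/
def PolyRetaining {V : Type*} (G : SimpleGraph V) (d : ℕ) : Prop :=
  ∃ K : ℕ, 0 < K ∧ RetainingProperty G (fun n => K * n ^ d) 1

/-- The finite-step `{f n}`-retaining property (fire reach one). -/
def FiniteStepRetainingProperty {V : Type*} (G : SimpleGraph V) (f : ℕ → ℕ) : Prop :=
  ∀ X0 : Set V, X0.Finite → ∃ W, IsRetainingStrategy G f 1 X0 W ∧ FiniteStepStrategy W

/-- The finite-step polynomial retaining property of degree `d`. -/
def FiniteStepPolyRetaining {V : Type*} (G : SimpleGraph V) (d : ℕ) : Prop :=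
  ∃ K : ℕ, 0 < K ∧ FiniteStepRetainingProperty G (fun n => K * n ^ d)

/-- The `({f n}, r)`-containment property. -/
def ContainmentProperty {V : Type*} (G : SimpleGraph V) (f : ℕ → ℕ) (r : ℕ) : Prop :=
  ∀ X0 : Set V, X0.Finite →
    ∃ W, IsStrategyBound f W ∧ (burnedSet G r W X0).Finite

/-- Polynomial containment property of degree `d` (fire reach one). -/
def PolyContainment {V : Type*} (G : SimpleGraph V) (d : ℕ) : Prop :=
  ∃ K : ℕ, 0 < K ∧ ContainmentProperty G (fun n => K * n ^ d) 1

/-- The constant containment property. -/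
def ConstantContainment {V : Type*} (G : SimpleGraph V) : Prop := PolyContainment G 0

/-- `D` is (the vertex set of) a connected component of `G \ K`. -/
def ComponentAvoiding {V : Type*} (G : SimpleGraph V) (K D : Set V) : Prop :=
  D.Nonempty ∧ D ⊆ Kᶜ ∧
  (∀ u ∈ D, ∀ v ∈ D, ∃ p : G.Walk u v, ∀ x ∈ p.support, x ∉ K) ∧
  (∀ u ∈ D, ∀ v : V, v ∉ K → (∃ p : G.Walk u v, ∀ x ∈ p.support, x ∉ K) → v ∈ D)

/-- A deep component of `G \ K`: not contained in any bounded neighborhood of `K`. -/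
def IsDeepComponent {V : Type*} (G : SimpleGraph V) (K D : Set V) : Prop :=
  ComponentAvoiding G K D ∧ ∀ r : ℕ, ¬ D ⊆ {v | ∃ k ∈ K, G.dist k v ≤ r}

/-- An unbounded component of `G \ K`. -/
def IsUnboundedComponent {V : Type*} (G : SimpleGraph V) (K D : Set V) : Prop :=
  ComponentAvoiding G K D ∧ ∀ (v : V) (r : ℕ), ¬ D ⊆ {u | G.dist v u ≤ r}

/-- Uniformly locally finite graph: vertex degrees are bounded. -/
def UnifLocFinite {V : Type*} (G : SimpleGraph V) : Prop :=
  ∃ M : ℕ, ∀ v : V, (G.neighborSet v).Finite ∧ (G.neighborSet v).ncard ≤ M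

/-- Locally finite graph. -/
def LocFinite {V : Type*} (G : SimpleGraph V) : Prop := ∀ v : V, (G.neighborSet v).Finite

/-- A `c`-quasi-isometry between two connected graphs (with their path-metrics). -/
def GraphQI {V V' : Type*} (c : ℝ) (G : SimpleGraph V) (H : SimpleGraph V') (φ : V → V') : Prop :=
  1 ≤ c ∧
  (∀ a b : V, (G.dist a b : ℝ) / c - c ≤ (H.dist (φ a) (φ b) : ℝ) ∧
    (H.dist (φ a) (φ b) : ℝ) ≤ c * (G.dist a b : ℝ) + c) ∧
  (∀ y : V', ∃ x : V, (H.dist (φ x) y : ℝ) ≤ c)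

/-- The Cayley graph of a group with respect to a set `S`. -/
def cayley (G : Type) [Group G] (S : Set G) : SimpleGraph G :=
  SimpleGraph.fromRel (fun a b => a⁻¹ * b ∈ S)

/-- `S` is a finite generating set. -/
def IsFiniteGenSet {G : Type} [Group G] (S : Set G) : Prop :=
  S.Finite ∧ Subgroup.closure S = ⊤

/-- The ball of radius `n` around the identity for the word metric w.r.t. `T`. -/
def wordBall {G : Type} [Group G] (T : Set G) (n : ℕ) : Set G :=
  {g | ∃ l : List G, (∀ x ∈ l, x ∈ T ∨ x⁻¹ ∈ T) ∧ l.length ≤ n ∧ l.prod = g}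

/-- The word metric w.r.t. `T`. -/
noncomputable def wordDist {G : Type} [Group G] (T : Set G) (x y : G) : ℕ :=
  sInf {n | x⁻¹ * y ∈ wordBall T n}

/-- `G` is an amalgamated product `A ∗_C B` with `C` a proper subgroup of both factors,
where `C` corresponds to the given subgroup. -/
def SplitsOverAmalgam (G : Type) [Group G] (C : Subgroup G) : Prop :=
  ∃ (Gi : Bool → Type) (_ : ∀ i, Group (Gi i)) (K : Type) (_ : Group K)
    (φ : ∀ i, K →* Gi i),
    (∀ i, Function.Injective (φ i)) ∧ (∀ i, ¬ Function.Surjective (φ i)) ∧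
    ∃ e : G ≃* Monoid.PushoutI φ,
      C = Subgroup.comap e.toMonoidHom (Monoid.PushoutI.base φ).range

/-- `G` is an HNN-extension over the given subgroup `C`. -/
def SplitsOverHNN (G : Type) [Group G] (C : Subgroup G) : Prop :=
  ∃ (H : Type) (_ : Group H) (A B : Subgroup H) (φ : A ≃* B)
    (e : G ≃* HNNExtension H A B φ),
    C = Subgroup.comap e.toMonoidHom
      (Subgroup.map (HNNExtension.of : H →* HNNExtension H A B φ) A)

/-- `G` splits over `C`: amalgamated product with `C` proper in both factors,
or HNN-extension over `C`. -/
def SplitsOver (G : Type) [Group G] (C : Subgroup G) : Prop :=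
  SplitsOverAmalgam G C ∨ SplitsOverHNN G C

/-- Amenability of a (discrete) group: existence of a left-invariant, finitely
additive probability measure defined on all subsets. -/
def IsAmenable (G : Type) [Group G] : Prop :=
  ∃ m : Set G → ℝ, (∀ A : Set G, 0 ≤ m A) ∧ m Set.univ = 1 ∧
    (∀ A B : Set G, Disjoint A B → m (A ∪ B) = m A + m B) ∧
    (∀ (g : G) (A : Set G), m ((g * ·) '' A) = m A)


lemma exists_nat_bound {α : Type*} (A : Set α) (hA : A.Finite) (f : α → ℝ) :
    ∃ M : ℕ, ∀ a ∈ A, f a ≤ M := by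
  obtain ⟨r, hr⟩ := (hA.image f).bddAbove
  exact ⟨⌈r⌉₊, fun a ha => le_trans (hr ⟨a, ha, rfl⟩) (Nat.le_ceil r)⟩

lemma ballSet_finite {X : Type*} [MetricSpace X] (h : UniformlyProper X)
    (A : Set X) (hA : A.Finite) (n : ℕ) :
    {x | ∃ a ∈ A, dist a x ≤ (n : ℝ)}.Finite := by
  obtain ⟨g, hg⟩ := h
  have hsub : {x | ∃ a ∈ A, dist a x ≤ (n : ℝ)} ⊆ ⋃ a ∈ A, {x | dist a x ≤ (n : ℝ)} := by
    rintro x ⟨a, ha, hx⟩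
    exact Set.mem_biUnion ha hx
  exact (hA.biUnion fun a _ => (hg a n).1).subset hsub

lemma growthLE_of_map {X Y : Type*} [MetricSpace X] [MetricSpace Y]
    (hX : UniformlyProper X) (hY : UniformlyProper Y)
    (A : Set X) (hA : A.Finite) (B : Set Y) (hB : B.Finite)
    (f : X → Y) (C D : ℕ)
    (hmap : ∀ (n : ℕ) (x : X), (∃ a ∈ A, dist a x ≤ (n : ℝ)) →
      ∃ b ∈ B, dist b (f x) ≤ ((C * n + C : ℕ) : ℝ))
    (hfib : ∀ x₁ x₂ : X, f x₁ = f x₂ → dist x₁ x₂ ≤ (D : ℝ)) :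
    GrowthLE (relGrowth Set.univ A) (relGrowth Set.univ B) := by
  classical
  obtain ⟨gX, hgX⟩ := id hX
  set C' := C + gX D + 1 with hC'
  refine ⟨C', by positivity, fun n => ?_⟩
  set m := C' * n + C' with hm
  have hSfin : {x : X | x ∈ Set.univ ∧ ∃ a ∈ A, dist a x ≤ (n : ℝ)}.Finite := by
    simpa using ballSet_finite hX A hA n
  have hTfin : {y : Y | y ∈ Set.univ ∧ ∃ b ∈ B, dist b y ≤ ((m : ℕ) : ℝ)}.Finite := by
    simpa using ballSet_finite hY B hB m
  set s := hSfin.toFinset with hs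
  set t := hTfin.toFinset with ht
  have hCm : ((C * n + C : ℕ) : ℝ) ≤ ((m : ℕ) : ℝ) := by
    have : C * n + C ≤ m := by
      have h1 : C ≤ C' := by omega
      calc C * n + C ≤ C' * n + C' := by
            exact add_le_add (Nat.mul_le_mul_right n h1) h1
        _ = m := hm.symm
    exact_mod_cast this
  have hmaps : ∀ x ∈ s, f x ∈ t := by
    intro x hx
    rw [hs, Set.Finite.mem_toFinset] at hx
    rw [ht, Set.Finite.mem_toFinset]
    obtain ⟨b, hb, hd⟩ := hmap n x hx.2
    exact ⟨Set.mem_univ _, b, hb, hd.trans hCm⟩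
  have hcard := Finset.card_eq_sum_card_fiberwise hmaps
  have hfibcard : ∀ y ∈ t, (s.filter fun x => f x = y).card ≤ gX D := by
    intro y _
    rcases (s.filter fun x => f x = y).eq_empty_or_nonempty with he | ⟨x₀, hx₀⟩
    · simp [he]
    · rw [Finset.mem_filter] at hx₀
      have hsub : ↑(s.filter fun x => f x = y) ⊆ {x : X | dist x₀ x ≤ (D : ℝ)} := by
        intro x hx
        rw [Finset.mem_coe, Finset.mem_filter] at hx
        exact hfib x₀ x (hx₀.2.trans hx.2.symm)
      calc (s.filter fun x => f x = y).card
          = (↑(s.filter fun x => f x = y) : Set X).ncard := (Set.ncard_coe_finset _).symm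
        _ ≤ Set.ncard {x : X | dist x₀ x ≤ (D : ℝ)} :=
            Set.ncard_le_ncard hsub (hgX x₀ D).1
        _ ≤ gX D := (hgX x₀ D).2
  have hmain : s.card ≤ gX D * t.card := by
    calc s.card = ∑ y ∈ t, (s.filter fun x => f x = y).card := hcard
      _ ≤ ∑ _y ∈ t, gX D := Finset.sum_le_sum hfibcard
      _ = t.card * gX D := by rw [Finset.sum_const, smul_eq_mul]
      _ = gX D * t.card := Nat.mul_comm _ _
  have hSn : relGrowth Set.univ A n = s.card := by
    rw [hs]; exact Set.ncard_eq_toFinset_card _ hSfin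
  have hTm : relGrowth Set.univ B m = t.card := by
    rw [ht]; exact Set.ncard_eq_toFinset_card _ hTfin
  calc relGrowth Set.univ A n = s.card := hSn
    _ ≤ gX D * t.card := hmain
    _ = gX D * relGrowth Set.univ B m := by rw [hTm]
    _ ≤ C' * relGrowth Set.univ B m := Nat.mul_le_mul_right _ (by omega)
    _ ≤ C' * relGrowth Set.univ B (C' * n + C') + C' := by rw [← hm]; omega

theorem stmt4 {X Y : Type*} [MetricSpace X] [MetricSpace Y]
    (hX : UniformlyProper X) (hY : UniformlyProper Y)
    (c : ℝ) (φ : X → Y) (hφ : IsQuasiIsometryMS c φ)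
    (A : Set X) (B : Set Y) (hA : A.Finite) (hAne : A.Nonempty)
    (hB : B.Finite) (hBne : B.Nonempty) :
    GrowthEquiv (relGrowth Set.univ A) (relGrowth Set.univ B) := by
  obtain ⟨hc, hqi, hdense⟩ := hφ
  have hc0 : (0 : ℝ) < c := lt_of_lt_of_le one_pos hc
  obtain ⟨a₀, ha₀⟩ := hAne
  obtain ⟨b₀, hb₀⟩ := hBne
  constructor
  · -- forward direction, via φ
    obtain ⟨M, hM⟩ := exists_nat_bound A hA (fun a => dist b₀ (φ a))
    set C := ⌈c⌉₊ + M + 1 with hC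
    refine growthLE_of_map hX hY A hA B hB φ C ⌈c * c⌉₊ ?_ ?_
    · rintro n x ⟨a, ha, hax⟩
      refine ⟨b₀, hb₀, ?_⟩
      have h1 : dist b₀ (φ x) ≤ dist b₀ (φ a) + dist (φ a) (φ x) := dist_triangle _ _ _
      have h2 : dist (φ a) (φ x) ≤ c * dist a x + c := (hqi a x).2
      have h3 : dist b₀ (φ a) ≤ M := hM a ha
      have h4 : c * dist a x ≤ c * n := by
        exact mul_le_mul_of_nonneg_left hax hc0.le
      have h5 : c ≤ (⌈c⌉₊ : ℝ) := Nat.le_ceil c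
      have h6 : (⌈c⌉₊ : ℝ) * n ≤ (C : ℝ) * n := by
        have : (⌈c⌉₊ : ℝ) ≤ C := by exact_mod_cast by omega
        exact mul_le_mul_of_nonneg_right this (Nat.cast_nonneg n)
      have h7 : c * (n : ℝ) ≤ (⌈c⌉₊ : ℝ) * n := mul_le_mul_of_nonneg_right h5 (Nat.cast_nonneg n)
      have hMC : (M : ℝ) + c ≤ (C : ℝ) := by
        have : (M : ℝ) + ⌈c⌉₊ ≤ C := by exact_mod_cast by omega
        linarith
      have : dist b₀ (φ x) ≤ (C : ℝ) * n + C := by linarith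
      calc dist b₀ (φ x) ≤ (C : ℝ) * n + C := this
        _ = ((C * n + C : ℕ) : ℝ) := by push_cast; ring
    · intro x₁ x₂ h
      have := (hqi x₁ x₂).1
      rw [h, dist_self] at this
      have hd : dist x₁ x₂ ≤ c * c := by
        rw [div_sub' hc0.ne', div_le_iff₀ hc0] at this
        nlinarith [this]
      exact hd.trans (Nat.le_ceil _)
  · -- reverse direction, via a quasi-inverse ψ
    choose ψ hψ using hdense
    obtain ⟨M, hM⟩ := exists_nat_bound B hB (fun b => dist (φ a₀) b)
    set C := ⌈c * (M + 2 * c)⌉₊ + ⌈c⌉₊ + 1 with hC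
    refine growthLE_of_map hY hX B hB A hA ψ C ⌈2 * c⌉₊ ?_ ?_
    · rintro n y ⟨b, hb, hby⟩
      refine ⟨a₀, ha₀, ?_⟩
      have h1 : dist a₀ (ψ y) / c - c ≤ dist (φ a₀) (φ (ψ y)) := (hqi a₀ (ψ y)).1
      have h2 : dist (φ a₀) (φ (ψ y)) ≤ dist (φ a₀) b + dist b y + dist y (φ (ψ y)) :=
        dist_triangle4 _ _ _ _
      have h3 : dist (φ a₀) b ≤ M := hM b hb
      have h4 : dist y (φ (ψ y)) ≤ c := by rw [dist_comm]; exact hψ y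
      have h5 : dist a₀ (ψ y) ≤ c * ((M : ℝ) + n + 2 * c) := by
        rw [div_sub' hc0.ne', div_le_iff₀ hc0] at h1
        nlinarith [h1]
      have h6 : c * ((M : ℝ) + n + 2 * c) = c * n + c * (M + 2 * c) := by ring
      have h7 : c * (n : ℝ) ≤ (C : ℝ) * n := by
        have : c ≤ (C : ℝ) := by
          calc c ≤ (⌈c⌉₊ : ℝ) := Nat.le_ceil c
            _ ≤ C := by exact_mod_cast by omega
        exact mul_le_mul_of_nonneg_right this (Nat.cast_nonneg n)
      have h8 : c * ((M : ℝ) + 2 * c) ≤ (C : ℝ) := by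
        calc c * ((M : ℝ) + 2 * c) ≤ (⌈c * (M + 2 * c)⌉₊ : ℝ) := Nat.le_ceil _
          _ ≤ C := by exact_mod_cast by omega
      calc dist a₀ (ψ y) ≤ (C : ℝ) * n + C := by linarith
        _ = ((C * n + C : ℕ) : ℝ) := by push_cast; ring
    · intro y₁ y₂ h
      have h1 : dist y₁ y₂ ≤ dist y₁ (φ (ψ y₁)) + dist (φ (ψ y₂)) y₂ := by
        calc dist y₁ y₂ ≤ dist y₁ (φ (ψ y₁)) + dist (φ (ψ y₁)) y₂ := dist_triangle _ _ _
          _ = dist y₁ (φ (ψ y₁)) + dist (φ (ψ y₂)) y₂ := by rw [h]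
      have h2 : dist y₁ (φ (ψ y₁)) ≤ c := by rw [dist_comm]; exact hψ y₁
      have h3 : dist (φ (ψ y₂)) y₂ ≤ c := hψ y₂
      calc dist y₁ y₂ ≤ 2 * c := by linarith
        _ ≤ (⌈2 * c⌉₊ : ℝ) := Nat.le_ceil _
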